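/- Expected one-step variance decrease for pairwise midpoint gossip in CAT(0): Let G be a finite connected graph on N vertices, (M,d) a complete CAT(0) space, and x ∈ M^V a configuration. Suppose an unordered edge {v,w} is selected at random with probability P({v,w}) = (1/N)(deg(v)⁻¹ + deg(w)⁻¹), and both x_v, x_w are replaced by their midpoint m (other coordinates unchanged), yielding the random configuration X'. Then E[σ²(X')] − σ²(x) ≤ −(1/2)·(1/N)·Δ(x), where σ²(x) = (1/N) Σ_{{u,u'}∈P₂(V)} d²(x_u, x_{u'}) and Δ(x) = Σ_{v∼w} (deg(v)⁻¹ + deg(w)⁻¹) d²(x_v, x_w). -/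

import Mathlib

open Finset

/-- The variance function `σ²(x) = (1/N) Σ_{{u,u'} ∈ P₂(V)} d²(x_u, x_{u'})`
(written as half the sum over ordered pairs). -/
noncomputable def sigma2 {V M : Type*} [Fintype V] [DecidableEq V] [MetricSpace M]
    (x : V → M) : ℝ :=
  (Fintype.card V : ℝ)⁻¹ *
    ((1 / 2 : ℝ) * ∑ v : V, ∑ w : V, if v ≠ w then dist (x v) (x w) ^ 2 else 0)

/-- The disagreement function `Δ(x) = Σ_{v∼w} (deg v⁻¹ + deg w⁻¹) d²(x_v, x_w)`
(written as half the sum over ordered adjacent pairs). -/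
noncomputable def disag {V M : Type*} [Fintype V] [MetricSpace M] (G : SimpleGraph V)
    [DecidableRel G.Adj] (x : V → M) : ℝ :=
  (1 / 2 : ℝ) * ∑ v : V, ∑ w : V,
    if G.Adj v w then ((G.degree v : ℝ)⁻¹ + (G.degree w : ℝ)⁻¹) * dist (x v) (x w) ^ 2
    else 0

/-- The configuration after agents `v` and `w` move to the midpoint of their values. -/
def updateConfig {V M : Type*} [DecidableEq V] (x : V → M) (mid : M → M → M) (v w : V) :
    V → M :=
  fun u => if u = v ∨ u = w then mid (x v) (x w) else x u

lemma sigma2_update_le {V M : Type*} [Fintype V] [DecidableEq V] [MetricSpace M]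
    (x : V → M) (mid : M → M → M)
    (hcat : ∀ a b u : M,
      2 * dist (mid a b) u ^ 2 ≤ dist a u ^ 2 + dist b u ^ 2 - dist a b ^ 2 / 2)
    (v w : V) (hvw : v ≠ w) :
    sigma2 (updateConfig x mid v w) ≤ sigma2 x - dist (x v) (x w) ^ 2 / 2 := by
  classical
  set m := mid (x v) (x w) with hm
  set y := updateConfig x mid v w with hy
  have hyv : y v = m := by simp [hy, updateConfig, hm]
  have hyw : y w = m := by simp [hy, updateConfig, hm]
  have hyu : ∀ u : V, u ≠ v → u ≠ w → y u = x u := by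
    intro u h1 h2; simp [hy, updateConfig, h1, h2]
  set s : Finset V := univ \ {v, w} with hs
  have hmem : ∀ u ∈ s, u ≠ v ∧ u ≠ w := by
    intro u hu
    have := (mem_sdiff.mp hu).2
    simp only [mem_insert, mem_singleton] at this
    exact ⟨fun h => this (Or.inl h), fun h => this (Or.inr h)⟩
  have hvs : v ∉ insert w s := by simp [hs, hvw]
  have hws : w ∉ s := by simp [hs]
  have huniv : (univ : Finset V) = insert v (insert w s) := by
    ext u
    by_cases h1 : u = v
    · simp [h1]
    · by_cases h2 : u = w
      · simp [h2]
      · simp [hs, h1, h2]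
  set D := dist (x v) (x w) ^ 2 with hD
  -- cardinality of s
  have hcard2 : 2 ≤ Fintype.card V := Fintype.one_lt_card_iff.mpr ⟨v, w, hvw⟩
  have hcards : (s.card : ℝ) = (Fintype.card V : ℝ) - 2 := by
    have h1 : s.card = Fintype.card V - 2 := by
      rw [hs, card_sdiff_of_subset (by intro u hu; exact mem_univ u)]
      simp [card_insert_of_notMem, hvw, Finset.card_univ]
    rw [h1]
    push_cast [Nat.cast_sub hcard2]
    ring
  -- row bound for u ∈ s
  have key : ∀ u ∈ s,
      (∑ u' : V, if u ≠ u' then dist (y u) (y u') ^ 2 else 0)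
        ≤ (∑ u' : V, if u ≠ u' then dist (x u) (x u') ^ 2 else 0) - D / 2 := by
    intro u hu
    obtain ⟨huv, huw⟩ := hmem u hu
    rw [huniv, sum_insert hvs, sum_insert hws, sum_insert hvs, sum_insert hws]
    have hrest : ∀ u' ∈ s, (if u ≠ u' then dist (y u) (y u') ^ 2 else 0)
        = (if u ≠ u' then dist (x u) (x u') ^ 2 else 0) := by
      intro u' hu'
      obtain ⟨h1, h2⟩ := hmem u' hu'
      rw [hyu u huv huw, hyu u' h1 h2]
    rw [Finset.sum_congr rfl hrest]
    have hc := hcat (x v) (x w) (x u)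
    rw [if_pos huv, if_pos huw, if_pos huv, if_pos huw, hyv, hyw, hyu u huv huw]
    rw [dist_comm (x u) m, dist_comm (x u) (x v), dist_comm (x u) (x w)]
    rw [← hm, ← hD] at hc
    linarith
  -- row values at v and w
  have hrowyv : (∑ u' : V, if v ≠ u' then dist (y v) (y u') ^ 2 else 0)
      = ∑ u' ∈ s, dist m (x u') ^ 2 := by
    rw [huniv, sum_insert hvs, sum_insert hws]
    rw [if_neg (by simp), if_pos hvw, hyv, hyw, dist_self]
    rw [show (0:ℝ) ^ 2 = 0 by norm_num, zero_add, zero_add]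
    refine Finset.sum_congr rfl fun u' hu' => ?_
    obtain ⟨h1, h2⟩ := hmem u' hu'
    rw [if_pos (Ne.symm h1), hyu u' h1 h2]
  have hrowyw : (∑ u' : V, if w ≠ u' then dist (y w) (y u') ^ 2 else 0)
      = ∑ u' ∈ s, dist m (x u') ^ 2 := by
    rw [huniv, sum_insert hvs, sum_insert hws]
    rw [if_pos (Ne.symm hvw), if_neg (by simp), hyw, hyv, dist_self]
    rw [show (0:ℝ) ^ 2 = 0 by norm_num, zero_add, zero_add]
    refine Finset.sum_congr rfl fun u' hu' => ?_
    obtain ⟨h1, h2⟩ := hmem u' hu'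
    rw [if_pos (Ne.symm h2), hyu u' h1 h2]
  have hrowxv : (∑ u' : V, if v ≠ u' then dist (x v) (x u') ^ 2 else 0)
      = D + ∑ u' ∈ s, dist (x v) (x u') ^ 2 := by
    rw [huniv, sum_insert hvs, sum_insert hws]
    rw [if_neg (by simp), if_pos hvw, zero_add, ← hD]
    congr 1
    refine Finset.sum_congr rfl fun u' hu' => ?_
    obtain ⟨h1, _⟩ := hmem u' hu'
    rw [if_pos (Ne.symm h1)]
  have hrowxw : (∑ u' : V, if w ≠ u' then dist (x w) (x u') ^ 2 else 0)
      = D + ∑ u' ∈ s, dist (x w) (x u') ^ 2 := by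
    rw [huniv, sum_insert hvs, sum_insert hws]
    rw [if_pos (Ne.symm hvw), if_neg (by simp), zero_add, dist_comm (x w) (x v), ← hD]
    congr 1
    refine Finset.sum_congr rfl fun u' hu' => ?_
    obtain ⟨_, h2⟩ := hmem u' hu'
    rw [if_pos (Ne.symm h2)]
  -- midpoint sum bound
  have hmidsum : (2:ℝ) * ∑ u' ∈ s, dist m (x u') ^ 2
      ≤ (∑ u' ∈ s, dist (x v) (x u') ^ 2) + (∑ u' ∈ s, dist (x w) (x u') ^ 2)
        - (s.card : ℝ) * (D / 2) := by
    have h1 : ∀ u' ∈ s, (2:ℝ) * dist m (x u') ^ 2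
        ≤ dist (x v) (x u') ^ 2 + dist (x w) (x u') ^ 2 - D / 2 := by
      intro u' _
      have hc := hcat (x v) (x w) (x u')
      rw [← hm, ← hD] at hc
      linarith
    calc (2:ℝ) * ∑ u' ∈ s, dist m (x u') ^ 2
        = ∑ u' ∈ s, (2:ℝ) * dist m (x u') ^ 2 := by rw [Finset.mul_sum]
      _ ≤ ∑ u' ∈ s, (dist (x v) (x u') ^ 2 + dist (x w) (x u') ^ 2 - D / 2) :=
          Finset.sum_le_sum h1
      _ = (∑ u' ∈ s, dist (x v) (x u') ^ 2) + (∑ u' ∈ s, dist (x w) (x u') ^ 2)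
            - (s.card : ℝ) * (D / 2) := by
          rw [Finset.sum_sub_distrib, Finset.sum_add_distrib, Finset.sum_const,
            nsmul_eq_mul]
  -- rows over s
  have hrows : (∑ u ∈ s, ∑ u' : V, if u ≠ u' then dist (y u) (y u') ^ 2 else 0)
      ≤ (∑ u ∈ s, ∑ u' : V, if u ≠ u' then dist (x u) (x u') ^ 2 else 0)
        - (s.card : ℝ) * (D / 2) := by
    calc (∑ u ∈ s, ∑ u' : V, if u ≠ u' then dist (y u) (y u') ^ 2 else 0)
        ≤ ∑ u ∈ s, ((∑ u' : V, if u ≠ u' then dist (x u) (x u') ^ 2 else 0) - D / 2) :=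
          Finset.sum_le_sum key
      _ = (∑ u ∈ s, ∑ u' : V, if u ≠ u' then dist (x u) (x u') ^ 2 else 0)
            - (s.card : ℝ) * (D / 2) := by
          rw [Finset.sum_sub_distrib, Finset.sum_const, nsmul_eq_mul]
  -- total sums
  have hSY : (∑ u : V, ∑ u' : V, if u ≠ u' then dist (y u) (y u') ^ 2 else 0)
      ≤ (∑ u : V, ∑ u' : V, if u ≠ u' then dist (x u) (x u') ^ 2 else 0)
        - (Fintype.card V : ℝ) * D := by
    have hsplit : ∀ g : V → ℝ, (∑ u : V, g u) = g v + (g w + ∑ u ∈ s, g u) := by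
      intro g; rw [huniv, sum_insert hvs, sum_insert hws]
    rw [hsplit (fun u => ∑ u' : V, if u ≠ u' then dist (y u) (y u') ^ 2 else 0),
      hsplit (fun u => ∑ u' : V, if u ≠ u' then dist (x u) (x u') ^ 2 else 0)]
    rw [hrowyv, hrowyw, hrowxv, hrowxw]
    have hDnn : (0:ℝ) ≤ D := by rw [hD]; positivity
    nlinarith [hrows, hmidsum, hcards, hcard2]
  -- conclude
  have hNpos : (0:ℝ) < (Fintype.card V : ℝ) := by
    have : 0 < Fintype.card V := by omega
    exact_mod_cast this
  rw [sigma2, sigma2]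
  set SX := ∑ u : V, ∑ u' : V, if u ≠ u' then dist (x u) (x u') ^ 2 else 0 with hSXd
  set SY := ∑ u : V, ∑ u' : V, if u ≠ u' then dist (y u) (y u') ^ 2 else 0 with hSYd
  have hinv : (Fintype.card V : ℝ)⁻¹ * (Fintype.card V : ℝ) = 1 :=
    inv_mul_cancel₀ (ne_of_gt hNpos)
  have h2 : (Fintype.card V : ℝ)⁻¹ * ((1/2) * SY)
      ≤ (Fintype.card V : ℝ)⁻¹ * ((1/2) * (SX - (Fintype.card V : ℝ) * D)) := by
    apply mul_le_mul_of_nonneg_left _ (le_of_lt (inv_pos.mpr hNpos))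
    linarith
  calc (Fintype.card V : ℝ)⁻¹ * ((1/2) * SY)
      ≤ (Fintype.card V : ℝ)⁻¹ * ((1/2) * (SX - (Fintype.card V : ℝ) * D)) := h2
    _ = (Fintype.card V : ℝ)⁻¹ * ((1/2) * SX) - D / 2 := by
        field_simp

/-- Expected one-step variance decrease for pairwise midpoint gossip in a complete CAT(0)
space: `E[σ²(X')] − σ²(x) ≤ −(1/(2N)) Δ(x)`, the expectation being over the random
unordered edge `{v,w}`, chosen with probability `(1/N)(deg v⁻¹ + deg w⁻¹)`. -/
theorem stmt_14 {V : Type*} [Fintype V] [DecidableEq V] (G : SimpleGraph V)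
    [DecidableRel G.Adj] (hG : G.Connected)
    {M : Type*} [MetricSpace M] [CompleteSpace M] (x : V → M)
    (mid : M → M → M)
    (hmid : ∀ a b : M, dist a (mid a b) = dist a b / 2 ∧ dist b (mid a b) = dist a b / 2)
    (hmid_symm : ∀ a b : M, mid a b = mid b a)
    (hcat : ∀ a b u : M,
      2 * dist (mid a b) u ^ 2 ≤ dist a u ^ 2 + dist b u ^ 2 - dist a b ^ 2 / 2) :
    ((1 / 2 : ℝ) * ∑ v : V, ∑ w : V,
        (if G.Adj v w then
          (Fintype.card V : ℝ)⁻¹ * ((G.degree v : ℝ)⁻¹ + (G.degree w : ℝ)⁻¹) *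
            sigma2 (updateConfig x mid v w)
        else 0)) - sigma2 x
      ≤ -(1 / 2 : ℝ) * (Fintype.card V : ℝ)⁻¹ * disag G x := by
  classical
  by_cases hlt : 1 < Fintype.card V
  case neg =>
    have hsub : ∀ a b : V, a = b := Fintype.card_le_one_iff.mp (Nat.not_lt.mp hlt)
    have h1 : ∀ a b : V, ¬ G.Adj a b := fun a b hA => hA.ne (hsub a b)
    have h2 : (∑ v : V, ∑ w : V, if v ≠ w then dist (x v) (x w) ^ 2 else 0) = 0 :=
      Finset.sum_eq_zero fun v _ => Finset.sum_eq_zero fun w _ =>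
        if_neg (by simp [hsub v w])
    simp [sigma2, disag, h1, h2]
    positivity
  case pos =>
  set N : ℝ := (Fintype.card V : ℝ) with hN
  have hNpos : (0:ℝ) < N := by
    have h0 : 0 < Fintype.card V := by omega
    rw [hN]; exact_mod_cast h0
  have hdeg : ∀ a : V, 0 < G.degree a := by
    intro a
    rw [G.degree_pos_iff_exists_adj]
    obtain ⟨b, hb⟩ := Fintype.exists_ne_of_one_lt_card hlt a
    obtain ⟨p⟩ := hG.preconnected a b
    exact ⟨p.getVert 1, p.adj_snd (SimpleGraph.Walk.not_nil_of_ne (Ne.symm hb))⟩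
  have hdeg' : ∀ a : V, ((G.degree a : ℝ)) ≠ 0 := fun a =>
    Nat.cast_ne_zero.mpr (hdeg a).ne'
  -- row sums of constants over neighbors
  have hrow : ∀ (a : V) (c : ℝ), (∑ b : V, if G.Adj a b then c else 0)
      = (G.degree a : ℝ) * c := by
    intro a c
    rw [← Finset.sum_filter, ← SimpleGraph.neighborFinset_eq_filter,
      Finset.sum_const, nsmul_eq_mul, SimpleGraph.card_neighborFinset_eq_degree]
  have hsum1 : (∑ a : V, ∑ b : V, if G.Adj a b then (G.degree a : ℝ)⁻¹ else 0) = N := by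
    have : ∀ a : V, (∑ b : V, if G.Adj a b then (G.degree a : ℝ)⁻¹ else 0) = 1 := by
      intro a; rw [hrow a]; exact mul_inv_cancel₀ (hdeg' a)
    rw [Finset.sum_congr rfl fun a _ => this a]
    simp [hN, Finset.card_univ]
  have hsum2 : (∑ a : V, ∑ b : V, if G.Adj a b then (G.degree b : ℝ)⁻¹ else 0) = N := by
    rw [Finset.sum_comm]
    have : ∀ b a : V, (if G.Adj a b then (G.degree b : ℝ)⁻¹ else 0)
        = (if G.Adj b a then (G.degree b : ℝ)⁻¹ else 0) := by
      intro b a; exact if_congr (G.adj_comm a b) rfl rfl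
    calc (∑ b : V, ∑ a : V, if G.Adj a b then (G.degree b : ℝ)⁻¹ else 0)
        = ∑ b : V, ∑ a : V, if G.Adj b a then (G.degree b : ℝ)⁻¹ else 0 :=
          Finset.sum_congr rfl fun b _ => Finset.sum_congr rfl fun a _ => this b a
      _ = N := hsum1
  have hP : (∑ a : V, ∑ b : V,
      if G.Adj a b then N⁻¹ * ((G.degree a : ℝ)⁻¹ + (G.degree b : ℝ)⁻¹) else 0) = 2 := by
    have hterm : ∀ a b : V,
        (if G.Adj a b then N⁻¹ * ((G.degree a : ℝ)⁻¹ + (G.degree b : ℝ)⁻¹) else 0)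
        = N⁻¹ * ((if G.Adj a b then (G.degree a : ℝ)⁻¹ else 0)
            + (if G.Adj a b then (G.degree b : ℝ)⁻¹ else 0)) := by
      intro a b; split <;> ring
    calc (∑ a : V, ∑ b : V,
          if G.Adj a b then N⁻¹ * ((G.degree a : ℝ)⁻¹ + (G.degree b : ℝ)⁻¹) else 0)
        = ∑ a : V, ∑ b : V, N⁻¹ * ((if G.Adj a b then (G.degree a : ℝ)⁻¹ else 0)
            + (if G.Adj a b then (G.degree b : ℝ)⁻¹ else 0)) :=
          Finset.sum_congr rfl fun a _ => Finset.sum_congr rfl fun b _ => hterm a b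
      _ = N⁻¹ * ((∑ a : V, ∑ b : V, if G.Adj a b then (G.degree a : ℝ)⁻¹ else 0)
            + (∑ a : V, ∑ b : V, if G.Adj a b then (G.degree b : ℝ)⁻¹ else 0)) := by
          simp only [← Finset.mul_sum, Finset.sum_add_distrib]
      _ = 2 := by rw [hsum1, hsum2]; field_simp; ring
  -- rewrite LHS difference
  have hsplit : ∀ a b : V,
      (if G.Adj a b then N⁻¹ * ((G.degree a : ℝ)⁻¹ + (G.degree b : ℝ)⁻¹) *
          sigma2 (updateConfig x mid a b) else 0)
      = (if G.Adj a b then N⁻¹ * ((G.degree a : ℝ)⁻¹ + (G.degree b : ℝ)⁻¹) *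
          (sigma2 (updateConfig x mid a b) - sigma2 x) else 0)
        + (if G.Adj a b then N⁻¹ * ((G.degree a : ℝ)⁻¹ + (G.degree b : ℝ)⁻¹) else 0)
          * sigma2 x := by
    intro a b; split <;> ring
  have hLHS : ((1 / 2 : ℝ) * ∑ v : V, ∑ w : V,
        (if G.Adj v w then N⁻¹ * ((G.degree v : ℝ)⁻¹ + (G.degree w : ℝ)⁻¹) *
            sigma2 (updateConfig x mid v w) else 0)) - sigma2 x
      = (1 / 2 : ℝ) * ∑ v : V, ∑ w : V,
        (if G.Adj v w then N⁻¹ * ((G.degree v : ℝ)⁻¹ + (G.degree w : ℝ)⁻¹) *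
            (sigma2 (updateConfig x mid v w) - sigma2 x) else 0) := by
    rw [Finset.sum_congr rfl fun a _ => Finset.sum_congr rfl fun b _ => hsplit a b]
    simp only [Finset.sum_add_distrib, ← Finset.sum_mul]
    rw [mul_add]
    have : (1 / 2 : ℝ) * ((∑ a : V, ∑ b : V,
        if G.Adj a b then N⁻¹ * ((G.degree a : ℝ)⁻¹ + (G.degree b : ℝ)⁻¹) else 0)
        * sigma2 x) = sigma2 x := by rw [hP]; ring
    rw [this]; ring
  rw [hLHS]
  -- bound termwise
  have hbound : ∀ a b : V,
      (if G.Adj a b then N⁻¹ * ((G.degree a : ℝ)⁻¹ + (G.degree b : ℝ)⁻¹) *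
          (sigma2 (updateConfig x mid a b) - sigma2 x) else 0)
      ≤ (if G.Adj a b then N⁻¹ * ((G.degree a : ℝ)⁻¹ + (G.degree b : ℝ)⁻¹) *
          (-(dist (x a) (x b) ^ 2 / 2)) else 0) := by
    intro a b
    split
    case isTrue h =>
      have h1 : sigma2 (updateConfig x mid a b) - sigma2 x ≤ -(dist (x a) (x b) ^ 2 / 2) := by
        have := sigma2_update_le x mid hcat a b h.ne
        linarith
      have h2 : (0:ℝ) ≤ N⁻¹ * ((G.degree a : ℝ)⁻¹ + (G.degree b : ℝ)⁻¹) := by positivity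
      exact mul_le_mul_of_nonneg_left h1 h2
    case isFalse h => exact le_refl 0
  have hfinal : ((1 / 2 : ℝ) * ∑ v : V, ∑ w : V,
      (if G.Adj v w then N⁻¹ * ((G.degree v : ℝ)⁻¹ + (G.degree w : ℝ)⁻¹) *
          (-(dist (x v) (x w) ^ 2 / 2)) else 0))
      = -(1 / 2 : ℝ) * N⁻¹ * disag G x := by
    rw [disag]
    simp only [Finset.mul_sum]
    refine Finset.sum_congr rfl fun a _ => Finset.sum_congr rfl fun b _ => ?_
    split <;> ring
  calc ((1 / 2 : ℝ) * ∑ v : V, ∑ w : V,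
      (if G.Adj v w then N⁻¹ * ((G.degree v : ℝ)⁻¹ + (G.degree w : ℝ)⁻¹) *
          (sigma2 (updateConfig x mid v w) - sigma2 x) else 0))
      ≤ (1 / 2 : ℝ) * ∑ v : V, ∑ w : V,
        (if G.Adj v w then N⁻¹ * ((G.degree v : ℝ)⁻¹ + (G.degree w : ℝ)⁻¹) *
            (-(dist (x v) (x w) ^ 2 / 2)) else 0) := by
        apply mul_le_mul_of_nonneg_left _ (by norm_num : (0:ℝ) ≤ 1/2)
        exact Finset.sum_le_sum fun a _ => Finset.sum_le_sum fun b _ => hbound a b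
    _ = -(1 / 2 : ℝ) * N⁻¹ * disag G x := hfinal
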